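/- Let n = 2k be even with n ≥ 4, and let G be the complement of a (k-1)-matching in K_n (so G has n-2 vertices of degree n-2 and 2 vertices of degree n-1), with m edges. Then μ(G) - 2m/n > 1/(2m + 2n). -/
import Mathlib

/-- The spectral radius (largest adjacency eigenvalue) of a graph. -/
noncomputable def graphMu {n : ℕ} (G : SimpleGraph (Fin n)) [DecidableRel G.Adj] : ℝ :=
  sSup {x : ℝ | Module.End.HasEigenvalue (Matrix.toLin' (G.adjMatrix ℝ)) x}

set_option maxHeartbeats 1000000 in
lemma complement_matching_gap_aux (n : ℕ) (hn4 : 4 ≤ n) (G : SimpleGraph (Fin n))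
    [DecidableRel G.Adj] (f : Fin n → Fin n) (a b : Fin n)
    (hab : a ≠ b) (hfa : f a = a) (hfb : f b = b)
    (hinv : ∀ x, f (f x) = x) (hfree : ∀ x, x ≠ a → x ≠ b → f x ≠ x)
    (hG : ∀ u v : Fin n, G.Adj u v ↔ (u ≠ v ∧ f u ≠ v)) :
    graphMu G - 2 * (G.edgeFinset.card : ℝ) / (n : ℝ) >
      1 / (2 * (G.edgeFinset.card : ℝ) + 2 * (n : ℝ)) := by
  classical
  -- neighbor finsets
  have hNb : ∀ u : Fin n, G.neighborFinset u = Finset.univ \ {u, f u} := by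
    intro u
    ext w
    simp only [SimpleGraph.mem_neighborFinset, hG, Finset.mem_sdiff, Finset.mem_univ,
      Finset.mem_insert, Finset.mem_singleton, true_and]
    constructor
    · rintro ⟨h1, h2⟩; rintro (rfl | rfl) <;> simp_all
    · intro h; push_neg at h; exact ⟨fun e => h.1 e.symm, fun e => h.2 e.symm⟩
  -- fixed points of f are exactly a and b
  have hfix : ∀ u : Fin n, f u = u ↔ (u = a ∨ u = b) := by
    intro u
    constructor
    · intro h
      by_contra hc
      push_neg at hc
      exact hfree u hc.1 hc.2 h
    · rintro (rfl | rfl) <;> assumption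
  have hcab : ({a, b} : Finset (Fin n)).card = 2 := by
    rw [Finset.card_insert_of_notMem (by simpa using hab), Finset.card_singleton]
  -- cardinality of {u, f u}
  have hcard : ∀ u : Fin n, ({u, f u} : Finset (Fin n)).card =
      if u = a ∨ u = b then 1 else 2 := by
    intro u
    by_cases h : u = a ∨ u = b
    · have : f u = u := (hfix u).2 h
      simp [this, h]
    · have : f u ≠ u := fun e => h ((hfix u).1 e)
      rw [if_neg h, Finset.card_insert_of_notMem (by simpa using Ne.symm this),
        Finset.card_singleton]
  -- degree formula
  have hdeg : ∀ u : Fin n, G.degree u = n - ({u, f u} : Finset (Fin n)).card := by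
    intro u
    rw [← SimpleGraph.card_neighborFinset_eq_degree, hNb u,
      Finset.card_sdiff_of_subset (Finset.subset_univ _)]
    simp
  -- edge count : 2 * m + 2 * n = n * n + 2
  have hmn : 2 * G.edgeFinset.card + 2 * n = n * n + 2 := by
    have hsum := G.sum_degrees_eq_twice_card_edges
    have h1 : ∑ u : Fin n, G.degree u + ∑ u : Fin n, ({u, f u} : Finset (Fin n)).card
        = n * n := by
      rw [← Finset.sum_add_distrib]
      have : ∀ u ∈ (Finset.univ : Finset (Fin n)),
          G.degree u + ({u, f u} : Finset (Fin n)).card = n := by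
        intro u _
        rw [hdeg u]
        have h2 : ({u, f u} : Finset (Fin n)).card ≤ n := by
          rw [hcard u]; split <;> omega
        omega
      rw [Finset.sum_congr rfl this]
      simp [mul_comm]
    have h2 : ∑ u : Fin n, ({u, f u} : Finset (Fin n)).card = 2 * n - 2 := by
      have e1 : ∀ u ∈ (Finset.univ : Finset (Fin n)),
          ({u, f u} : Finset (Fin n)).card = if u = a ∨ u = b then 1 else 2 :=
        fun u _ => hcard u
      rw [Finset.sum_congr rfl e1, Finset.sum_ite, Finset.sum_const, Finset.sum_const]
      have hfil : Finset.filter (fun u => u = a ∨ u = b) Finset.univ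
          = ({a, b} : Finset (Fin n)) := by
        ext u; simp [Finset.mem_insert]
      have hfil2 : Finset.filter (fun u => ¬(u = a ∨ u = b)) Finset.univ
          = Finset.univ \ ({a, b} : Finset (Fin n)) := by
        rw [Finset.filter_not, hfil]
      rw [hfil, hfil2, hcab, Finset.card_sdiff_of_subset (Finset.subset_univ _), hcab]
      simp only [smul_eq_mul, Finset.card_univ, Fintype.card_fin]
      omega
    omega
  -- real versions
  have hNR : (4:ℝ) ≤ (n:ℝ) := by exact_mod_cast hn4
  have hn0 : (0:ℝ) < (n:ℝ) := by linarith
  have harg : (0:ℝ) < (n:ℝ)^2 - 2*(n:ℝ) + 9 := by nlinarith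
  set s : ℝ := Real.sqrt ((n:ℝ)^2 - 2*(n:ℝ) + 9) with hsdef
  have hs2 : s^2 = (n:ℝ)^2 - 2*(n:ℝ) + 9 := Real.sq_sqrt harg.le
  have hspos : 0 < s := Real.sqrt_pos.mpr harg
  set lam : ℝ := ((n:ℝ) - 3 + s)/2 with hlam
  have hquad : lam^2 = ((n:ℝ)-3)*lam + (n:ℝ) := by
    rw [hlam]; field_simp; nlinarith [hs2]
  set x : ℝ := (lam - (n:ℝ) + 4)/2 with hx
  set v : Fin n → ℝ := fun w => if w = a ∨ w = b then x else 1 with hv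
  -- total sum of v
  have hsumv : ∑ w : Fin n, v w = 2*x + ((n:ℝ) - 2) := by
    rw [hv]
    rw [Finset.sum_ite, Finset.sum_const, Finset.sum_const]
    have hfil : Finset.filter (fun u => u = a ∨ u = b) Finset.univ
        = ({a, b} : Finset (Fin n)) := by
      ext u; simp [Finset.mem_insert]
    have hfil2 : Finset.filter (fun u => ¬(u = a ∨ u = b)) Finset.univ
        = Finset.univ \ ({a, b} : Finset (Fin n)) := by
      rw [Finset.filter_not, hfil]
    rw [hfil, hfil2, hcab, Finset.card_sdiff_of_subset (Finset.subset_univ _), hcab]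
    have hc2 : ((n - 2 : ℕ) : ℝ) = (n:ℝ) - 2 := by
      have h2 : (2:ℕ) ≤ n := by omega
      push_cast [h2]; ring
    simp only [smul_eq_mul, nsmul_eq_mul, Finset.card_univ, Fintype.card_fin, mul_one, hc2]
    ring
  -- eigen equation
  have hmv : ∀ u : Fin n, (G.adjMatrix ℝ).mulVec v u = lam * v u := by
    intro u
    rw [SimpleGraph.adjMatrix_mulVec_apply, hNb u,
      Finset.sum_sdiff_eq_sub (Finset.subset_univ _), hsumv]
    by_cases h : u = a ∨ u = b
    · have hfu : f u = u := (hfix u).2 h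
      have hvu : v u = x := if_pos h
      rw [hfu]
      simp only [Finset.pair_eq_singleton, Finset.sum_singleton, hvu]
      rw [hx]
      field_simp
      nlinarith [hquad]
    · push_neg at h
      have hfu : f u ≠ u := fun e => ((hfix u).1 e).elim h.1 h.2
      have hfua : f u ≠ a := fun e => h.1 (by rw [← hinv u, e, hfa])
      have hfub : f u ≠ b := fun e => h.2 (by rw [← hinv u, e, hfb])
      have hvu : v u = 1 := if_neg (by simp [h.1, h.2])
      have hvfu : v (f u) = 1 := if_neg (by simp [hfua, hfub])
      rw [Finset.sum_pair (Ne.symm hfu), hvu, hvfu, hx]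
      ring
  -- v is nonzero
  have hvne : v ≠ 0 := by
    have hnon : (Finset.univ \ ({a, b} : Finset (Fin n))).Nonempty := by
      rw [← Finset.card_pos, Finset.card_sdiff_of_subset (Finset.subset_univ _), hcab]
      simp only [Finset.card_univ, Fintype.card_fin]
      omega
    obtain ⟨c, hc⟩ := hnon
    rw [Finset.mem_sdiff, Finset.mem_insert, Finset.mem_singleton] at hc
    intro h0
    have hvc : v c = 1 := if_neg (by push_neg at hc; simp [hc.2.1, hc.2.2])
    rw [h0] at hvc
    simp at hvc
  -- lam is an eigenvalue
  have heig : Module.End.HasEigenvalue (Matrix.toLin' (G.adjMatrix ℝ)) lam := by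
    apply Module.End.hasEigenvalue_of_hasEigenvector (x := v)
    refine ⟨Module.End.mem_eigenspace_iff.mpr ?_, hvne⟩
    rw [Matrix.toLin'_apply]
    funext u
    rw [Pi.smul_apply, smul_eq_mul]
    exact hmv u
  -- graphMu is at least lam
  have hfin : Set.Finite {y : ℝ | Module.End.HasEigenvalue (Matrix.toLin' (G.adjMatrix ℝ)) y} :=
    Module.End.finite_hasEigenvalue _
  have hle : lam ≤ graphMu G := le_csSup hfin.bddAbove heig
  -- final arithmetic
  have hm : (2:ℝ) * (G.edgeFinset.card : ℝ) = (n:ℝ)^2 - 2*(n:ℝ) + 2 := by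
    have := hmn
    have hcast : (2:ℝ) * (G.edgeFinset.card : ℝ) + 2*(n:ℝ) = (n:ℝ)*(n:ℝ) + 2 := by
      exact_mod_cast congrArg (fun t : ℕ => (t:ℝ)) this
    have hsq : (n:ℝ)*(n:ℝ) = (n:ℝ)^2 := (sq (n:ℝ)).symm
    linarith [hcast]
  have h2m2n : (2:ℝ) * (G.edgeFinset.card : ℝ) + 2*(n:ℝ) = (n:ℝ)^2 + 2 := by linarith [hm]
  have key : ((n:ℝ)^4 - (n:ℝ)^3 + 6*(n:ℝ)^2 + 8)/((n:ℝ)^3 + 2*(n:ℝ)) < s := by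
    rw [hsdef]
    have hden : (0:ℝ) < (n:ℝ)^3 + 2*(n:ℝ) := by positivity
    have hnum : (0:ℝ) ≤ (n:ℝ)^4 - (n:ℝ)^3 + 6*(n:ℝ)^2 + 8 := by nlinarith
    rw [Real.lt_sqrt (by positivity), div_pow, div_lt_iff₀ (by positivity)]
    nlinarith [hNR, sq_nonneg ((n:ℝ)), sq_nonneg ((n:ℝ)-4), sq_nonneg ((n:ℝ)^2-4*(n:ℝ))]
  have key2 : s * ((n:ℝ)^3 + 2*(n:ℝ)) > (n:ℝ)^4 - (n:ℝ)^3 + 6*(n:ℝ)^2 + 8 := by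
    have hden : (0:ℝ) < (n:ℝ)^3 + 2*(n:ℝ) := by positivity
    rw [gt_iff_lt, ← div_lt_iff₀ hden]
    exact key
  have goal' : 1/((n:ℝ)^2 + 2) < lam - ((n:ℝ)^2 - 2*(n:ℝ) + 2)/(n:ℝ) := by
    have h22 : (0:ℝ) < (n:ℝ)^2 + 2 := by positivity
    rw [hlam, div_sub_div _ _ (two_ne_zero) hn0.ne', div_lt_div_iff₀ h22 (by positivity)]
    nlinarith [key2]
  calc 1 / (2 * (G.edgeFinset.card : ℝ) + 2 * (n:ℝ)) = 1/((n:ℝ)^2 + 2) := by rw [h2m2n]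
    _ < lam - ((n:ℝ)^2 - 2*(n:ℝ) + 2)/(n:ℝ) := goal'
    _ = lam - 2 * (G.edgeFinset.card : ℝ)/(n:ℝ) := by rw [← hm]
    _ ≤ graphMu G - 2 * (G.edgeFinset.card : ℝ)/(n:ℝ) := by linarith [hle]

theorem complement_matching_gap {k : ℕ} (hk : 2 ≤ k) (G : SimpleGraph (Fin (2 * k)))
    [DecidableRel G.Adj] (f : Fin (2 * k) → Fin (2 * k)) (a b : Fin (2 * k))
    (hab : a ≠ b) (hfa : f a = a) (hfb : f b = b)
    (hinv : ∀ x, f (f x) = x) (hfree : ∀ x, x ≠ a → x ≠ b → f x ≠ x)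
    (hG : ∀ u v : Fin (2 * k), G.Adj u v ↔ (u ≠ v ∧ f u ≠ v)) :
    graphMu G - 2 * (G.edgeFinset.card : ℝ) / (2 * k) >
      1 / (2 * (G.edgeFinset.card : ℝ) + 2 * (2 * k)) := by
  have := complement_matching_gap_aux (2 * k) (by omega) G f a b hab hfa hfb hinv hfree hG
  push_cast at this ⊢
  convert this using 3 <;> ring
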